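/- Let r ∈ (3,∞) and let s > 0 satisfy 2/s + 3/r ≤ 1. Then for every ε > 0 there exists a constant C > 0 depending only on ε, r and s such that for every measurable function f : ℝ³ → ℝ with finite weak-L^r quasinorm and every continuously differentiable g : ℝ³ → ℝ with ‖g‖_{L²(ℝ³)} < ∞ and ‖∇g‖_{L²(ℝ³)} < ∞, the product f·g is in L²(ℝ³) and ‖f·g‖_{L²(ℝ³)}² ≤ ε · ‖∇g‖_{L²(ℝ³)}² + C · (‖f‖_{L^r_ω}^s + 1) · ‖g‖_{L²(ℝ³)}². -/

import Mathlib

open MeasureTheory ENNReal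

/-- The weak-`L^r` quasinorm on ℝ³ (with Lebesgue measure):
`‖f‖_{L^r_ω} = sup_{λ>0} λ |{x : |f x| > λ}|^{1/r}`. -/
noncomputable def weakLNorm (r : ℝ) (f : EuclideanSpace ℝ (Fin 3) → ℝ) : ℝ≥0∞ :=
  ⨆ (l : ℝ) (_ : 0 < l), ENNReal.ofReal l * (volume {x | l < |f x|}) ^ (1 / r)

open Filter Topology Set Metric
open scoped NNReal
set_option maxHeartbeats 2000000

local notation "E3" => EuclideanSpace ℝ (Fin 3)

noncomputable def C6 : ℝ≥0 :=
  eLpNormLESNormFDerivOfEqInnerConst (volume : Measure (EuclideanSpace ℝ (Fin 3))) 2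

lemma gns_cpt (u : EuclideanSpace ℝ (Fin 3) → ℝ) (hu : ContDiff ℝ 1 u)
    (h2u : HasCompactSupport u) :
    eLpNorm u 6 volume ≤ (C6 : ℝ≥0∞) * eLpNorm (fderiv ℝ u) 2 volume := by
  have h := eLpNorm_le_eLpNorm_fderiv_of_eq_inner (μ := (volume : Measure (EuclideanSpace ℝ (Fin 3))))
    (u := u) hu h2u (p := 2) (p' := 6) one_le_two (by simp) ?_
  · have e6 : ((6 : ℝ≥0) : ℝ≥0∞) = 6 := by norm_num
    have e2 : ((2 : ℝ≥0) : ℝ≥0∞) = 2 := by norm_num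
    rw [e6, e2] at h
    refine h.trans (le_of_eq ?_)
    rfl
  · rw [finrank_euclideanSpace_fin]
    rw [NNReal.coe_inv]
    norm_num

lemma sobolev_six (g : EuclideanSpace ℝ (Fin 3) → ℝ) (hg : ContDiff ℝ 1 g)
    (hA : eLpNorm g 2 volume ≠ ∞) :
    eLpNorm g 6 volume ≤ (C6 : ℝ≥0∞) * eLpNorm (fderiv ℝ g) 2 volume := by
  -- bump function
  let φ : ContDiffBump (0 : E3) := ⟨1, 2, one_pos, one_lt_two⟩
  have hφd : ContDiff ℝ 1 (φ : E3 → ℝ) := φ.contDiff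
  have hφK : ∃ K, ∀ x, ‖fderiv ℝ (φ : E3 → ℝ) x‖ ≤ K :=
    (φ.hasCompactSupport.fderiv ℝ).exists_bound_of_continuous (hφd.continuous_fderiv one_ne_zero)
  obtain ⟨K, hK⟩ := hφK
  have hK0 : 0 ≤ K := le_trans (norm_nonneg _) (hK 0)
  -- the cutoff family
  set χ : ℕ → E3 → ℝ := fun n x => φ (((n : ℝ) + 1)⁻¹ • x) with hχ
  have hc : ∀ n : ℕ, (0:ℝ) < ((n : ℝ) + 1)⁻¹ := fun n => by positivity
  have hχd : ∀ n, ContDiff ℝ 1 (χ n) := fun n => hφd.comp (contDiff_id.const_smul _)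
  have hχcs : ∀ n, HasCompactSupport (χ n) := by
    intro n
    have := φ.hasCompactSupport.comp_homeomorph
      (Homeomorph.smulOfNeZero (((n : ℝ) + 1)⁻¹) (hc n).ne')
    exact this
  -- derivative formula and bound for χ
  have hχfd : ∀ n x, ‖fderiv ℝ (χ n) x‖ ≤ K * ((n : ℝ) + 1)⁻¹ := by
    intro n x
    set c := ((n : ℝ) + 1)⁻¹
    have hL : χ n = (φ : E3 → ℝ) ∘ (fun x : E3 => c • x) := rfl
    have hdi : DifferentiableAt ℝ (fun x : E3 => c • x) x :=
      (differentiable_id.const_smul c).differentiableAt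
    have := fderiv_comp (𝕜 := ℝ) x (hφd.differentiable one_ne_zero (c • x)) hdi
    rw [hL, this]
    have hfs : fderiv ℝ (fun x : E3 => c • x) x = c • (ContinuousLinearMap.id ℝ E3) :=
      ((hasFDerivAt_id x).const_smul c).fderiv
    rw [hfs]
    calc ‖(fderiv ℝ (φ : E3 → ℝ) (c • x)).comp (c • ContinuousLinearMap.id ℝ E3)‖
        ≤ ‖fderiv ℝ (φ : E3 → ℝ) (c • x)‖ * ‖c • ContinuousLinearMap.id ℝ E3‖ :=
          ContinuousLinearMap.opNorm_comp_le _ _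
      _ ≤ K * c := by
          apply mul_le_mul (hK _) ?_ (norm_nonneg _) hK0
          calc ‖c • ContinuousLinearMap.id ℝ E3‖
              ≤ ‖c‖ * ‖ContinuousLinearMap.id ℝ E3‖ := ContinuousLinearMap.opNorm_smul_le c _
            _ ≤ ‖c‖ * 1 :=
                mul_le_mul_of_nonneg_left ContinuousLinearMap.norm_id_le (norm_nonneg _)
            _ = c := by rw [mul_one, Real.norm_eq_abs, abs_of_pos (hc n)]
  -- the truncated functions
  set gn : ℕ → E3 → ℝ := fun n x => χ n x * g x with hgn
  have hgnd : ∀ n, ContDiff ℝ 1 (gn n) := fun n => (hχd n).mul hg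
  have hgncs : ∀ n, HasCompactSupport (gn n) := fun n => (hχcs n).mul_right
  -- pointwise convergence
  have hlim : ∀ x, Tendsto (fun n => gn n x) atTop (𝓝 (g x)) := by
    intro x
    apply tendsto_atTop_of_eventually_const (i₀ := Nat.ceil ‖x‖)
    intro n hn
    have h1 : χ n x = 1 := by
      apply φ.one_of_mem_closedBall
      rw [mem_closedBall_zero_iff, norm_smul, Real.norm_eq_abs, abs_of_pos (hc n)]
      have hx : ‖x‖ ≤ (n : ℝ) + 1 := by
        calc ‖x‖ ≤ (Nat.ceil ‖x‖ : ℝ) := Nat.le_ceil _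
          _ ≤ (n : ℝ) := by exact_mod_cast hn
          _ ≤ (n : ℝ) + 1 := by linarith
      rw [inv_mul_le_iff₀ (by positivity)]
      rw [show φ.rIn = 1 from rfl]
      simpa using hx
    simp [hgn, h1]
  -- Fatou
  have hFatou : eLpNorm g 6 volume ≤ atTop.liminf fun n => eLpNorm (gn n) 6 volume :=
    Lp.eLpNorm_lim_le_liminf_eLpNorm
      (fun n => ((hgnd n).continuous).aestronglyMeasurable) g
      (Eventually.of_forall hlim)
  -- bound for each n
  have hbound : ∀ n, eLpNorm (gn n) 6 volume ≤
      (C6 : ℝ≥0∞) * eLpNorm (fderiv ℝ g) 2 volume +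
      ((C6 : ℝ≥0∞) * ENNReal.ofReal K * eLpNorm g 2 volume) * ENNReal.ofReal (((n:ℝ)+1)⁻¹) := by
    intro n
    have h1 := gns_cpt (gn n) (hgnd n) (hgncs n)
    have h2 : eLpNorm (fderiv ℝ (gn n)) 2 volume ≤
        eLpNorm (fderiv ℝ g) 2 volume + ENNReal.ofReal (K * ((n:ℝ)+1)⁻¹) * eLpNorm g 2 volume := by
      have hfd : ∀ x, fderiv ℝ (gn n) x = χ n x • fderiv ℝ g x + g x • fderiv ℝ (χ n) x := by
        intro x
        exact fderiv_mul ((hχd n).differentiable one_ne_zero x) (hg.differentiable one_ne_zero x)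
      calc eLpNorm (fderiv ℝ (gn n)) 2 volume
          = eLpNorm (fun x => χ n x • fderiv ℝ g x + g x • fderiv ℝ (χ n) x) 2 volume :=
            eLpNorm_congr_ae (Eventually.of_forall hfd)
        _ ≤ eLpNorm (fun x => χ n x • fderiv ℝ g x) 2 volume +
            eLpNorm (fun x => g x • fderiv ℝ (χ n) x) 2 volume := by
            apply eLpNorm_add_le (f := fun x => χ n x • fderiv ℝ g x) (g := fun x => g x • fderiv ℝ (χ n) x)
            · exact ((hχd n).continuous.smul (hg.continuous_fderiv one_ne_zero)).aestronglyMeasurable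
            · exact (hg.continuous.smul ((hχd n).continuous_fderiv one_ne_zero)).aestronglyMeasurable
            · norm_num
        _ ≤ eLpNorm (fderiv ℝ g) 2 volume + ENNReal.ofReal (K * ((n:ℝ)+1)⁻¹) * eLpNorm g 2 volume := by
            gcongr
            · apply eLpNorm_mono
              intro x
              rw [norm_smul]
              have h1 : ‖χ n x‖ ≤ 1 := by
                rw [Real.norm_eq_abs, abs_of_nonneg φ.nonneg]; exact φ.le_one
              nlinarith [norm_nonneg (fderiv ℝ g x), norm_nonneg (χ n x)]
            · apply eLpNorm_le_mul_eLpNorm_of_ae_le_mul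
              apply Eventually.of_forall
              intro x
              rw [norm_smul, mul_comm]
              exact mul_le_mul_of_nonneg_right (hχfd n x) (norm_nonneg _)
    calc eLpNorm (gn n) 6 volume ≤ (C6 : ℝ≥0∞) * eLpNorm (fderiv ℝ (gn n)) 2 volume := h1
      _ ≤ (C6 : ℝ≥0∞) * (eLpNorm (fderiv ℝ g) 2 volume +
            ENNReal.ofReal (K * ((n:ℝ)+1)⁻¹) * eLpNorm g 2 volume) := by gcongr
      _ = (C6 : ℝ≥0∞) * eLpNorm (fderiv ℝ g) 2 volume +
          ((C6 : ℝ≥0∞) * ENNReal.ofReal K * eLpNorm g 2 volume) * ENNReal.ofReal (((n:ℝ)+1)⁻¹) := by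
          rw [mul_add]
          congr 1
          rw [ENNReal.ofReal_mul hK0]
          ring
  -- take the limit
  have htend : Tendsto (fun n : ℕ => (C6 : ℝ≥0∞) * eLpNorm (fderiv ℝ g) 2 volume +
      ((C6 : ℝ≥0∞) * ENNReal.ofReal K * eLpNorm g 2 volume) * ENNReal.ofReal (((n:ℝ)+1)⁻¹))
      atTop (𝓝 ((C6 : ℝ≥0∞) * eLpNorm (fderiv ℝ g) 2 volume)) := by
    have h0 : Tendsto (fun n : ℕ => ENNReal.ofReal (((n:ℝ)+1)⁻¹)) atTop (𝓝 0) := by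
      rw [show (0 : ℝ≥0∞) = ENNReal.ofReal 0 by simp]
      apply ENNReal.tendsto_ofReal
      exact tendsto_one_div_add_atTop_nhds_zero_nat.congr (by intro n; rw [one_div])
    have h1 : Tendsto (fun n : ℕ => ((C6 : ℝ≥0∞) * ENNReal.ofReal K * eLpNorm g 2 volume) *
        ENNReal.ofReal (((n:ℝ)+1)⁻¹)) atTop
        (𝓝 (((C6 : ℝ≥0∞) * ENNReal.ofReal K * eLpNorm g 2 volume) * 0)) :=
      ENNReal.Tendsto.const_mul h0
        (Or.inr (ENNReal.mul_ne_top (ENNReal.mul_ne_top ENNReal.coe_ne_top ENNReal.ofReal_ne_top) hA))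
    rw [mul_zero] at h1
    simpa using (tendsto_const_nhds.add h1)
  calc eLpNorm g 6 volume ≤ atTop.liminf fun n => eLpNorm (gn n) 6 volume := hFatou
    _ ≤ atTop.liminf fun n : ℕ => (C6 : ℝ≥0∞) * eLpNorm (fderiv ℝ g) 2 volume +
        ((C6 : ℝ≥0∞) * ENNReal.ofReal K * eLpNorm g 2 volume) * ENNReal.ofReal (((n:ℝ)+1)⁻¹) :=
        liminf_le_liminf (Eventually.of_forall hbound)
    _ = (C6 : ℝ≥0∞) * eLpNorm (fderiv ℝ g) 2 volume := htend.liminf_eq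

lemma weak_meas_bound {r : ℝ} (hr : 0 < r) (f : E3 → ℝ) {l : ℝ} (hl : 0 < l) :
    volume {x | l < |f x|} ≤ (weakLNorm r f / ENNReal.ofReal l) ^ r := by
  have h1 : ENNReal.ofReal l * (volume {x | l < |f x|}) ^ (1 / r) ≤ weakLNorm r f := by
    exact le_iSup₂ (f := fun (l : ℝ) (_ : 0 < l) =>
      ENNReal.ofReal l * (volume {x | l < |f x|}) ^ (1 / r)) l hl
  have hl0 : ENNReal.ofReal l ≠ 0 := by simp [hl]
  have h2 : (volume {x | l < |f x|}) ^ (1 / r) ≤ weakLNorm r f / ENNReal.ofReal l := by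
    rw [ENNReal.le_div_iff_mul_le (Or.inl hl0) (Or.inl ENNReal.ofReal_ne_top)]
    rwa [mul_comm]
  calc volume {x | l < |f x|}
      = ((volume {x | l < |f x|}) ^ (1 / r)) ^ r := by
        rw [← ENNReal.rpow_mul, one_div, inv_mul_cancel₀ hr.ne', ENNReal.rpow_one]
    _ ≤ (weakLNorm r f / ENNReal.ofReal l) ^ r := ENNReal.rpow_le_rpow h2 hr.le

lemma real_term_eq {a m : ℝ} (ha : 0 < a) (hm : 0 < m) (r : ℝ) (k : ℕ) :
    (a * 2 ^ (k+1)) ^ (3:ℝ) * (m / (a * 2 ^ k)) ^ r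
      = 8 * m ^ r * a ^ ((3:ℝ) - r) * ((2:ℝ) ^ ((3:ℝ) - r)) ^ (k:ℝ) := by
  have h2k : (0:ℝ) < 2 ^ k := by positivity
  have h2k1 : (0:ℝ) < 2 ^ (k+1) := by positivity
  have har : a ^ r ≠ 0 := (Real.rpow_pos_of_pos ha r).ne'
  have h2r : (2:ℝ) ^ ((k:ℝ) * r) ≠ 0 := (Real.rpow_pos_of_pos two_pos _).ne'
  have e1 : (a * 2 ^ (k+1):ℝ) ^ (3:ℝ) = a ^ (3:ℝ) * ((2:ℝ) ^ ((3:ℝ)*k) * 2 ^ (3:ℝ)) := by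
    rw [Real.mul_rpow ha.le h2k1.le, ← Real.rpow_natCast 2 (k+1), ← Real.rpow_mul (by norm_num)]
    rw [← Real.rpow_add two_pos]
    congr 1
    push_cast
    ring
  have e2 : ((m / (a * 2 ^ k)):ℝ) ^ r = m ^ r / (a ^ r * (2:ℝ) ^ ((k:ℝ) * r)) := by
    rw [Real.div_rpow hm.le (by positivity), Real.mul_rpow ha.le h2k.le,
      ← Real.rpow_natCast 2 k, ← Real.rpow_mul (by norm_num)]
  have e3 : a ^ ((3:ℝ) - r) = a ^ (3:ℝ) / a ^ r := Real.rpow_sub ha 3 r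
  have e4 : ((2:ℝ) ^ ((3:ℝ) - r)) ^ (k:ℝ) = (2:ℝ) ^ ((3:ℝ)*k) / (2:ℝ) ^ ((k:ℝ)*r) := by
    rw [← Real.rpow_mul (by norm_num), sub_mul, Real.rpow_sub two_pos]
    congr 2 <;> ring
  rw [e1, e2, e3, e4]
  have h8 : (2:ℝ) ^ (3:ℝ) = 8 := by
    rw [show (3:ℝ) = ((3:ℕ):ℝ) by norm_num, Real.rpow_natCast]; norm_num
  rw [h8]
  field_simp

lemma tail_bound {r : ℝ} (hr : 3 < r) {f : E3 → ℝ} (hf : Measurable f)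
    (hM0 : weakLNorm r f ≠ 0) (hMt : weakLNorm r f ≠ ∞) {a : ℝ} (ha : 0 < a) :
    ∫⁻ x in {x | a < |f x|}, (ENNReal.ofReal |f x|) ^ (3:ℝ) ≤
      ENNReal.ofReal ((8 * (1 - (2:ℝ) ^ ((3:ℝ) - r))⁻¹) *
        (weakLNorm r f).toReal ^ r * a ^ ((3:ℝ) - r)) := by
  classical
  have hr0 : (0:ℝ) < r := by linarith
  set m := (weakLNorm r f).toReal with hm_def
  have hm : 0 < m := ENNReal.toReal_pos hM0 hMt
  have hMeq : weakLNorm r f = ENNReal.ofReal m := (ENNReal.ofReal_toReal hMt).symm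
  set S : ℕ → Set E3 := fun k => {x | a * 2 ^ k < |f x|} with hS
  have hmeas : ∀ k, MeasurableSet (S k) := fun k =>
    measurableSet_lt measurable_const hf.abs
  have h00 : {x | a < |f x|} = S 0 := by simp [hS]
  -- covering
  have hcov : S 0 ⊆ ⋃ k, S k \ S (k + 1) := by
    intro x hx
    have hex : ∃ k, x ∉ S k := by
      obtain ⟨k, hk⟩ := pow_unbounded_of_one_lt (|f x| / a) (one_lt_two (α := ℝ))
      refine ⟨k, ?_⟩
      simp only [hS, mem_setOf_eq, not_lt]
      rw [div_lt_iff₀ ha] at hk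
      nlinarith [hk]
    have hk0 : x ∉ S (Nat.find hex) := Nat.find_spec hex
    have hk0pos : Nat.find hex ≠ 0 := by
      intro h
      apply hk0
      rw [h]
      simpa [hS] using hx
    obtain ⟨j, hj⟩ := Nat.exists_eq_succ_of_ne_zero hk0pos
    refine mem_iUnion.2 ⟨j, ?_, ?_⟩
    · exact not_not.mp (Nat.find_min hex (by omega))
    · rw [show j + 1 = Nat.find hex by omega]; exact hk0
  -- measure bound per level
  have hmb : ∀ k : ℕ, volume (S k) ≤
      ENNReal.ofReal ((m / (a * 2 ^ k)) ^ r) := by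
    intro k
    have hpos : (0:ℝ) < a * 2 ^ k := by positivity
    have := weak_meas_bound (r := r) hr0 f hpos
    refine this.trans (le_of_eq ?_)
    rw [hMeq, ← ENNReal.ofReal_div_of_pos hpos, ENNReal.ofReal_rpow_of_pos (by positivity)]
  -- per-piece bound
  have hpiece : ∀ k : ℕ, ∫⁻ x in S k \ S (k+1), (ENNReal.ofReal |f x|) ^ (3:ℝ) ≤
      ENNReal.ofReal (8 * m ^ r * a ^ ((3:ℝ) - r)) *
        ENNReal.ofReal (((2:ℝ) ^ ((3:ℝ) - r))) ^ k := by
    intro k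
    have hb : ∀ x ∈ S k \ S (k+1), (ENNReal.ofReal |f x|) ^ (3:ℝ) ≤
        ENNReal.ofReal ((a * 2 ^ (k+1)) ^ (3:ℝ)) := by
      intro x hx
      rw [← ENNReal.ofReal_rpow_of_pos (by positivity)]
      apply ENNReal.rpow_le_rpow _ (by norm_num)
      apply ENNReal.ofReal_le_ofReal
      have := hx.2
      simp only [hS, mem_setOf_eq, not_lt] at this
      exact this
    calc ∫⁻ x in S k \ S (k+1), (ENNReal.ofReal |f x|) ^ (3:ℝ)
        ≤ ∫⁻ _ in S k \ S (k+1), ENNReal.ofReal ((a * 2 ^ (k+1)) ^ (3:ℝ)) :=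
          setLIntegral_mono' ((hmeas k).diff (hmeas (k+1))) hb
      _ = ENNReal.ofReal ((a * 2 ^ (k+1)) ^ (3:ℝ)) * volume (S k \ S (k+1)) := by
          rw [setLIntegral_const]
      _ ≤ ENNReal.ofReal ((a * 2 ^ (k+1)) ^ (3:ℝ)) * ENNReal.ofReal ((m / (a * 2 ^ k)) ^ r) := by
          gcongr
          exact le_trans (measure_mono diff_subset) (hmb k)
      _ = ENNReal.ofReal ((a * 2 ^ (k+1)) ^ (3:ℝ) * (m / (a * 2 ^ k)) ^ r) := by
          rw [ENNReal.ofReal_mul (by positivity)]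
      _ = ENNReal.ofReal (8 * m ^ r * a ^ ((3:ℝ) - r)) *
            ENNReal.ofReal (((2:ℝ) ^ ((3:ℝ) - r))) ^ k := by
          rw [real_term_eq ha hm r k, Real.rpow_natCast _ k, ENNReal.ofReal_mul (by positivity),
            ENNReal.ofReal_pow (by positivity)]
  -- geometric series
  have hq1 : (2:ℝ) ^ ((3:ℝ) - r) < 1 :=
    Real.rpow_lt_one_of_one_lt_of_neg one_lt_two (by linarith)
  have hq0 : (0:ℝ) < (2:ℝ) ^ ((3:ℝ) - r) := Real.rpow_pos_of_pos two_pos _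
  calc ∫⁻ x in {x | a < |f x|}, (ENNReal.ofReal |f x|) ^ (3:ℝ)
      ≤ ∫⁻ x in ⋃ k, S k \ S (k+1), (ENNReal.ofReal |f x|) ^ (3:ℝ) := by
        rw [h00]; exact lintegral_mono_set hcov
    _ ≤ ∑' k, ∫⁻ x in S k \ S (k+1), (ENNReal.ofReal |f x|) ^ (3:ℝ) :=
        lintegral_iUnion_le _ _
    _ ≤ ∑' k, ENNReal.ofReal (8 * m ^ r * a ^ ((3:ℝ) - r)) *
          ENNReal.ofReal (((2:ℝ) ^ ((3:ℝ) - r))) ^ k := ENNReal.tsum_le_tsum hpiece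
    _ = ENNReal.ofReal (8 * m ^ r * a ^ ((3:ℝ) - r)) *
          (1 - ENNReal.ofReal ((2:ℝ) ^ ((3:ℝ) - r)))⁻¹ := by
        rw [ENNReal.tsum_mul_left, ENNReal.tsum_geometric]
    _ = ENNReal.ofReal ((8 * (1 - (2:ℝ) ^ ((3:ℝ) - r))⁻¹) * m ^ r * a ^ ((3:ℝ) - r)) := by
        rw [← ENNReal.ofReal_one, ← ENNReal.ofReal_sub _ hq0.le,
          ← ENNReal.ofReal_inv_of_pos (by linarith), ← ENNReal.ofReal_mul (by positivity)]
        congr 1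
        ring

lemma eLpNorm_two_sq (h : E3 → ℝ) :
    (eLpNorm h 2 volume) ^ (2:ℝ) = ∫⁻ x, (ENNReal.ofReal |h x|) ^ (2:ℝ) := by
  rw [eLpNorm_eq_lintegral_rpow_enorm_toReal (by norm_num) (by norm_num), ← ENNReal.rpow_mul]
  simp only [ENNReal.toReal_ofNat]
  norm_num
  apply lintegral_congr
  intro x
  rw [Real.enorm_eq_ofReal_abs]

lemma eLpNorm_six (h : E3 → ℝ) :
    (eLpNorm h 6 volume) ^ (6:ℝ) = ∫⁻ x, (ENNReal.ofReal |h x|) ^ (6:ℝ) := by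
  rw [eLpNorm_eq_lintegral_rpow_enorm_toReal (by norm_num) (by norm_num), ← ENNReal.rpow_mul]
  simp only [ENNReal.toReal_ofNat]
  norm_num
  apply lintegral_congr
  intro x
  rw [Real.enorm_eq_ofReal_abs]

lemma holder_32 {F G : E3 → ℝ≥0∞} (hF : AEMeasurable F volume) (hG : AEMeasurable G volume) :
    ∫⁻ x, F x * G x ≤
      (∫⁻ x, F x ^ ((3:ℝ)/2)) ^ ((2:ℝ)/3) * (∫⁻ x, G x ^ (3:ℝ)) ^ ((1:ℝ)/3) := by
  have h := ENNReal.lintegral_mul_le_Lp_mul_Lq volume (p := 3/2) (q := 3)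
    ⟨by norm_num, by norm_num, by norm_num⟩ hF hG
  have e1 : (1:ℝ) / (3/2) = 2/3 := by norm_num
  rw [e1] at h
  exact h

/-- Weak-Lebesgue interpolation estimate (Lemma 2.4):
`‖f g‖_{L²}² ≤ ε ‖∇g‖_{L²}² + C (‖f‖_{L^r_ω}^s + 1) ‖g‖_{L²}²`. -/
theorem weak_lebesgue_interpolation (r s : ℝ) (hr : 3 < r) (hs : 0 < s)
    (hrs : 2 / s + 3 / r ≤ 1) :
    ∀ ε : ℝ, 0 < ε →
      ∃ C : ℝ, 0 < C ∧
        ∀ f g : EuclideanSpace ℝ (Fin 3) → ℝ,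
          Measurable f → weakLNorm r f ≠ ∞ →
          ContDiff ℝ 1 g →
          eLpNorm g 2 volume ≠ ∞ →
          eLpNorm (fun x => ‖gradient g x‖) 2 volume ≠ ∞ →
          MemLp (fun x => f x * g x) 2 volume ∧
            (eLpNorm (fun x => f x * g x) 2 volume).toReal ^ 2 ≤
              ε * (eLpNorm (fun x => ‖gradient g x‖) 2 volume).toReal ^ 2 +
                C * ((weakLNorm r f).toReal ^ s + 1) * (eLpNorm g 2 volume).toReal ^ 2 := by
  intro ε hε
  have hr3 : (0:ℝ) < r - 3 := by linarith
  -- real constants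
  set k6 : ℝ := ((C6 : ℝ≥0) : ℝ) with hk6
  have hk60 : 0 ≤ k6 := (C6 : ℝ≥0).coe_nonneg
  have hq1 : (2:ℝ) ^ ((3:ℝ) - r) < 1 :=
    Real.rpow_lt_one_of_one_lt_of_neg one_lt_two (by linarith)
  set kr : ℝ := 8 * (1 - (2:ℝ) ^ ((3:ℝ) - r))⁻¹ with hkr
  have hkr0 : 0 < kr := by
    apply _root_.mul_pos (by norm_num)
    rw [inv_pos]
    linarith
  set c0 : ℝ := kr ^ ((2:ℝ)/3) * k6 ^ 2 + 1 with hc0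
  have hc00 : 0 < c0 := by positivity
  set D : ℝ := (c0 / ε) ^ ((3:ℝ) / (2 * (r - 3))) with hD
  have hD0 : 0 < D := Real.rpow_pos_of_pos (by positivity) _
  refine ⟨D ^ 2 + 1, by positivity, ?_⟩
  intro f g hfm hMt hg hA hBg
  set M := weakLNorm r f with hMdef
  set A := eLpNorm g 2 volume with hAdef
  set Bg := eLpNorm (fun x => ‖gradient g x‖) 2 volume with hBgdef
  have hBeq : eLpNorm (fderiv ℝ g) 2 volume = Bg := by
    rw [hBgdef]
    apply eLpNorm_congr_norm_ae
    apply Eventually.of_forall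
    intro x
    rw [Real.norm_eq_abs, abs_of_nonneg (norm_nonneg _), gradient,
      LinearIsometryEquiv.norm_map]
  by_cases hM0 : M = 0
  · -- degenerate case: f = 0 a.e.
    have hf0 : ∀ᵐ x ∂(volume : Measure E3), f x = 0 := by
      have hnull : ∀ n : ℕ, volume {x | ((n:ℝ)+1)⁻¹ < |f x|} = 0 := by
        intro n
        have hpos : (0:ℝ) < ((n:ℝ)+1)⁻¹ := by positivity
        have hle := le_iSup₂ (f := fun (l : ℝ) (_ : 0 < l) =>
          ENNReal.ofReal l * (volume {x | l < |f x|}) ^ (1 / r)) (((n:ℝ)+1)⁻¹) hpos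
        rw [← weakLNorm, ← hMdef, hM0, le_zero_iff, mul_eq_zero] at hle
        rcases hle with h | h
        · exact absurd h (ENNReal.ofReal_pos.mpr hpos).ne'
        · have hr0 : (0:ℝ) < 1 / r := by positivity
          rcases (ENNReal.rpow_eq_zero_iff.mp h) with ⟨h1, _⟩ | ⟨_, h2⟩
          · exact h1
          · linarith
      have hsub : {x | f x ≠ 0} ⊆ ⋃ n : ℕ, {x | ((n:ℝ)+1)⁻¹ < |f x|} := by
        intro x hx
        have habs : 0 < |f x| := abs_pos.2 hx
        obtain ⟨n, hn⟩ := exists_nat_one_div_lt habs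
        exact mem_iUnion.2 ⟨n, by rw [mem_setOf_eq, ← one_div]; exact hn⟩
      have hz : volume {x | f x ≠ 0} = 0 :=
        measure_mono_null hsub (measure_iUnion_null fun n => hnull n)
      rw [ae_iff]
      exact hz
    have hfg0 : (fun x => f x * g x) =ᵐ[(volume : Measure E3)] (fun _ => (0:ℝ)) :=
      hf0.mono fun x hx => by show f x * g x = 0; rw [hx, zero_mul]
    constructor
    · exact MemLp.zero'.ae_eq hfg0.symm
    · have hz : eLpNorm (fun x => f x * g x) 2 volume = 0 := by
        rw [eLpNorm_congr_ae hfg0]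
        simp
      rw [hz]
      simp only [ENNReal.toReal_zero]
      have h1 : (0:ℝ) ≤ M.toReal ^ s := Real.rpow_nonneg ENNReal.toReal_nonneg s
      have h2 : (0:ℝ) ≤ Bg.toReal ^ 2 := sq_nonneg _
      have h3 : (0:ℝ) ≤ A.toReal ^ 2 := sq_nonneg _
      have t1 : (0:ℝ) ≤ ε * Bg.toReal ^ 2 := mul_nonneg hε.le h2
      have t2 : (0:ℝ) ≤ (D ^ 2 + 1) * (M.toReal ^ s + 1) * A.toReal ^ 2 :=
        mul_nonneg (mul_nonneg (by positivity) (by linarith)) h3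
      nlinarith
  · -- main case
    set m : ℝ := M.toReal with hmdef
    have hm : 0 < m := ENNReal.toReal_pos hM0 hMt
    set p : ℝ := r / (r - 3) with hp
    set a : ℝ := D * m ^ p with ha_def
    have hmp : 0 < m ^ p := Real.rpow_pos_of_pos hm p
    have ha : 0 < a := mul_pos hD0 hmp
    set S : Set E3 := {x | a < |f x|} with hSdef
    have hSme : MeasurableSet S := measurableSet_lt measurable_const hfm.abs
    set F : E3 → ℝ≥0∞ := fun x => ENNReal.ofReal |f x| with hF
    set G : E3 → ℝ≥0∞ := fun x => ENNReal.ofReal |g x| with hG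
    have hFG : ∀ x, ENNReal.ofReal |f x * g x| = F x * G x := fun x => by
      rw [hF, hG, abs_mul, ENNReal.ofReal_mul (abs_nonneg _)]
    have hFmeas : Measurable F := ENNReal.measurable_ofReal.comp hfm.abs
    have hGmeas : Measurable G := ENNReal.measurable_ofReal.comp hg.continuous.measurable.abs
    set I := ∫⁻ x, (F x * G x) ^ (2:ℝ) with hI
    have hIe : (eLpNorm (fun x => f x * g x) 2 volume) ^ (2:ℝ) = I := by
      rw [eLpNorm_two_sq]
      apply lintegral_congr
      intro x
      rw [hFG]
    -- Sobolev
    have hSob : eLpNorm g 6 volume ≤ (C6 : ℝ≥0∞) * Bg := by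
      rw [← hBeq]
      exact sobolev_six g hg hA
    -- split the integral
    have hsplit : I = (∫⁻ x in S, (F x * G x) ^ (2:ℝ)) + ∫⁻ x in Sᶜ, (F x * G x) ^ (2:ℝ) := by
      rw [hI, ← lintegral_add_compl (fun x => (F x * G x) ^ (2:ℝ)) hSme]
    -- complement piece
    have hGsq : ∫⁻ x, G x ^ (2:ℝ) = A ^ (2:ℝ) := (eLpNorm_two_sq g).symm
    have hcomp : ∫⁻ x in Sᶜ, (F x * G x) ^ (2:ℝ) ≤ ENNReal.ofReal (a^2) * A ^ (2:ℝ) := by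
      calc ∫⁻ x in Sᶜ, (F x * G x) ^ (2:ℝ)
          ≤ ∫⁻ x in Sᶜ, ENNReal.ofReal (a^2) * G x ^ (2:ℝ) := by
            apply setLIntegral_mono' hSme.compl
            intro x hx
            have hxle : |f x| ≤ a := by
              have : ¬ (a < |f x|) := hx
              linarith [not_lt.mp this]
            rw [ENNReal.mul_rpow_of_nonneg _ _ (by norm_num : (0:ℝ) ≤ 2)]
            gcongr
            rw [← Real.rpow_natCast a 2, ← ENNReal.ofReal_rpow_of_pos ha]
            push_cast
            apply ENNReal.rpow_le_rpow _ (by norm_num)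
            exact ENNReal.ofReal_le_ofReal hxle
          _ ≤ ∫⁻ x, ENNReal.ofReal (a^2) * G x ^ (2:ℝ) := setLIntegral_le_lintegral _ _
          _ = ENNReal.ofReal (a^2) * ∫⁻ x, G x ^ (2:ℝ) :=
            lintegral_const_mul' _ _ ENNReal.ofReal_ne_top
          _ = ENNReal.ofReal (a^2) * A ^ (2:ℝ) := by rw [hGsq]
    -- main piece, via Hölder
    have hmain : ∫⁻ x in S, (F x * G x) ^ (2:ℝ) ≤
        (∫⁻ x in S, F x ^ (3:ℝ)) ^ ((2:ℝ)/3) * ((C6 : ℝ≥0∞) * Bg) ^ (2:ℝ) := by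
      have hind : ∫⁻ x in S, (F x * G x) ^ (2:ℝ) =
          ∫⁻ x, (S.indicator (fun x => F x ^ (2:ℝ)) x) * G x ^ (2:ℝ) := by
        rw [← lintegral_indicator hSme]
        apply lintegral_congr
        intro x
        by_cases hx : x ∈ S
        · rw [indicator_of_mem hx, indicator_of_mem hx,
            ENNReal.mul_rpow_of_nonneg _ _ (by norm_num : (0:ℝ) ≤ 2)]
        · rw [indicator_of_notMem hx, indicator_of_notMem hx, zero_mul]
      have hholder := holder_32 (F := S.indicator (fun x => F x ^ (2:ℝ)))
        (G := fun x => G x ^ (2:ℝ))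
        ((hFmeas.pow_const (2:ℝ)).indicator hSme).aemeasurable
        (hGmeas.pow_const (2:ℝ)).aemeasurable
      have hfac1 : ∫⁻ x, (S.indicator (fun x => F x ^ (2:ℝ)) x) ^ ((3:ℝ)/2) =
          ∫⁻ x in S, F x ^ (3:ℝ) := by
        rw [← lintegral_indicator hSme]
        apply lintegral_congr
        intro x
        by_cases hx : x ∈ S
        · rw [indicator_of_mem hx, indicator_of_mem hx, ← ENNReal.rpow_mul]
          norm_num
        · rw [indicator_of_notMem hx, indicator_of_notMem hx,
            ENNReal.zero_rpow_of_pos (by norm_num)]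
      have hfac2 : (∫⁻ x, (G x ^ (2:ℝ)) ^ (3:ℝ)) ^ ((1:ℝ)/3) =
          ((eLpNorm g 6 volume) ^ (6:ℝ)) ^ ((1:ℝ)/3) := by
        congr 1
        rw [eLpNorm_six]
        apply lintegral_congr
        intro x
        rw [← ENNReal.rpow_mul]
        norm_num
        rfl
      calc ∫⁻ x in S, (F x * G x) ^ (2:ℝ)
          = ∫⁻ x, (S.indicator (fun x => F x ^ (2:ℝ)) x) * G x ^ (2:ℝ) := hind
        _ ≤ (∫⁻ x, (S.indicator (fun x => F x ^ (2:ℝ)) x) ^ ((3:ℝ)/2)) ^ ((2:ℝ)/3) *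
              (∫⁻ x, (G x ^ (2:ℝ)) ^ (3:ℝ)) ^ ((1:ℝ)/3) := hholder
        _ = (∫⁻ x in S, F x ^ (3:ℝ)) ^ ((2:ℝ)/3) *
              ((eLpNorm g 6 volume) ^ (6:ℝ)) ^ ((1:ℝ)/3) := by rw [hfac1, hfac2]
        _ = (∫⁻ x in S, F x ^ (3:ℝ)) ^ ((2:ℝ)/3) * (eLpNorm g 6 volume) ^ (2:ℝ) := by
            rw [← ENNReal.rpow_mul]
            norm_num
        _ ≤ (∫⁻ x in S, F x ^ (3:ℝ)) ^ ((2:ℝ)/3) * ((C6 : ℝ≥0∞) * Bg) ^ (2:ℝ) := by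
            gcongr
    -- tail estimate
    have htail : ∫⁻ x in S, F x ^ (3:ℝ) ≤
        ENNReal.ofReal (kr * m ^ r * a ^ ((3:ℝ) - r)) := by
      have := tail_bound hr hfm hM0 hMt ha
      exact this
    -- the ε-smallness
    have hkey : (ENNReal.ofReal (kr * m ^ r * a ^ ((3:ℝ) - r))) ^ ((2:ℝ)/3) *
        ((C6 : ℝ≥0∞)) ^ (2:ℝ) ≤ ENNReal.ofReal ε := by
      have hreal : (kr * m ^ r * a ^ ((3:ℝ) - r)) ^ ((2:ℝ)/3) * k6 ^ 2 ≤ ε := by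
        -- compute kr * m^r * a^(3-r) = kr * D^(3-r)
        have har : a ^ ((3:ℝ) - r) = D ^ ((3:ℝ) - r) * m ^ (-r) := by
          rw [ha_def, Real.mul_rpow hD0.le hmp.le, ← Real.rpow_mul hm.le]
          congr 2
          rw [hp]
          field_simp
          ring
        have hmr : m ^ r * m ^ (-r) = 1 := by
          rw [← Real.rpow_add hm]
          simp
        have hprod : kr * m ^ r * a ^ ((3:ℝ) - r) = kr * D ^ ((3:ℝ) - r) := by
          rw [har]
          calc kr * m ^ r * (D ^ ((3:ℝ) - r) * m ^ (-r))
              = kr * D ^ ((3:ℝ) - r) * (m ^ r * m ^ (-r)) := by ring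
            _ = kr * D ^ ((3:ℝ) - r) := by rw [hmr, mul_one]
        have hDpow : (D ^ ((3:ℝ) - r)) ^ ((2:ℝ)/3) = ε / c0 := by
          rw [hD, ← Real.rpow_mul (by positivity), ← Real.rpow_mul (by positivity)]
          have hexp : (3:ℝ) / (2 * (r - 3)) * (((3:ℝ) - r) * ((2:ℝ)/3)) = -1 := by
            field_simp
            ring
          rw [hexp, Real.rpow_neg_one, inv_div]
        rw [hprod, Real.mul_rpow hkr0.le (Real.rpow_pos_of_pos hD0 _).le, hDpow]
        have hle : kr ^ ((2:ℝ)/3) * k6 ^ 2 ≤ c0 := by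
          rw [hc0]
          linarith
        calc kr ^ ((2:ℝ)/3) * (ε / c0) * k6 ^ 2
            = (kr ^ ((2:ℝ)/3) * k6 ^ 2) * (ε / c0) := by ring
          _ ≤ c0 * (ε / c0) := by
              apply mul_le_mul_of_nonneg_right hle (by positivity)
          _ = ε := by field_simp
      calc (ENNReal.ofReal (kr * m ^ r * a ^ ((3:ℝ) - r))) ^ ((2:ℝ)/3) * ((C6 : ℝ≥0∞)) ^ (2:ℝ)
          = ENNReal.ofReal ((kr * m ^ r * a ^ ((3:ℝ) - r)) ^ ((2:ℝ)/3)) *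
              ENNReal.ofReal (k6 ^ 2) := by
            rw [ENNReal.ofReal_rpow_of_nonneg (by positivity) (by norm_num)]
            congr 1
            rw [← ENNReal.ofReal_coe_nnreal, ENNReal.ofReal_rpow_of_nonneg hk60 (by norm_num)]
            congr 1
            rw [← Real.rpow_natCast k6 2]
            norm_num
        _ = ENNReal.ofReal ((kr * m ^ r * a ^ ((3:ℝ) - r)) ^ ((2:ℝ)/3) * k6 ^ 2) := by
            rw [ENNReal.ofReal_mul (by positivity)]
        _ ≤ ENNReal.ofReal ε := ENNReal.ofReal_le_ofReal hreal
    -- the λ² bound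
    have hlam : ENNReal.ofReal (a ^ 2) ≤ ENNReal.ofReal ((D ^ 2 + 1) * (m ^ s + 1)) := by
      apply ENNReal.ofReal_le_ofReal
      have hp0 : 0 < p := div_pos (by linarith) hr3
      have h2p : 2 * p ≤ s := by
        have h1 : 2 / s ≤ (r - 3) / r := by
          have hh : (3:ℝ) / r = 1 - (r - 3)/r := by field_simp; ring
          linarith [hrs]
        have h2 : 2 * r ≤ s * (r - 3) := by
          rw [div_le_div_iff₀ hs (by linarith : (0:ℝ) < r)] at h1
          linarith
        rw [hp, mul_div_assoc']
        rw [div_le_iff₀ hr3]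
        linarith
      have hmsq : (m ^ p) ^ 2 = m ^ (2 * p) := by
        rw [← Real.rpow_natCast (m ^ p) 2, ← Real.rpow_mul hm.le]
        norm_num
        rw [mul_comm]
      have hmle : m ^ (2 * p) ≤ m ^ s + 1 := by
        rcases le_or_gt m 1 with hm1 | hm1
        · have : m ^ (2 * p) ≤ 1 := Real.rpow_le_one hm.le hm1 (by positivity)
          have hms : 0 ≤ m ^ s := Real.rpow_nonneg hm.le s
          linarith
        · have : m ^ (2 * p) ≤ m ^ s := Real.rpow_le_rpow_of_exponent_le hm1.le h2p
          linarith
      have hD2 : 0 ≤ D ^ 2 := sq_nonneg D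
      have hms0 : 0 ≤ m ^ s + 1 := by positivity
      calc a ^ 2 = D ^ 2 * (m ^ p) ^ 2 := by rw [ha_def]; ring
        _ = D ^ 2 * m ^ (2 * p) := by rw [hmsq]
        _ ≤ D ^ 2 * (m ^ s + 1) := by
            apply mul_le_mul_of_nonneg_left hmle hD2
        _ ≤ (D ^ 2 + 1) * (m ^ s + 1) := by nlinarith
    -- assemble the ENNReal bound
    have hIbound : I ≤ ENNReal.ofReal ε * Bg ^ (2:ℝ) +
        ENNReal.ofReal ((D ^ 2 + 1) * (m ^ s + 1)) * A ^ (2:ℝ) := by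
      rw [hsplit]
      have h1 : ∫⁻ x in S, (F x * G x) ^ (2:ℝ) ≤ ENNReal.ofReal ε * Bg ^ (2:ℝ) := by
        calc ∫⁻ x in S, (F x * G x) ^ (2:ℝ)
            ≤ (∫⁻ x in S, F x ^ (3:ℝ)) ^ ((2:ℝ)/3) * ((C6 : ℝ≥0∞) * Bg) ^ (2:ℝ) := hmain
          _ = ((∫⁻ x in S, F x ^ (3:ℝ)) ^ ((2:ℝ)/3) * ((C6 : ℝ≥0∞)) ^ (2:ℝ)) * Bg ^ (2:ℝ) := by
              rw [ENNReal.mul_rpow_of_nonneg _ _ (by norm_num : (0:ℝ) ≤ 2)]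
              ring
          _ ≤ ((ENNReal.ofReal (kr * m ^ r * a ^ ((3:ℝ) - r))) ^ ((2:ℝ)/3) *
                ((C6 : ℝ≥0∞)) ^ (2:ℝ)) * Bg ^ (2:ℝ) := by
              gcongr
          _ ≤ ENNReal.ofReal ε * Bg ^ (2:ℝ) := mul_le_mul_left hkey _
      have h2 : ∫⁻ x in Sᶜ, (F x * G x) ^ (2:ℝ) ≤
          ENNReal.ofReal ((D ^ 2 + 1) * (m ^ s + 1)) * A ^ (2:ℝ) :=
        hcomp.trans (mul_le_mul_left hlam _)
      exact add_le_add h1 h2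
    -- finiteness
    have hBfin : Bg ^ (2:ℝ) ≠ ∞ := ENNReal.rpow_ne_top_of_nonneg (by norm_num) hBg
    have hAfin : A ^ (2:ℝ) ≠ ∞ := ENNReal.rpow_ne_top_of_nonneg (by norm_num) hA
    have hRfin : ENNReal.ofReal ε * Bg ^ (2:ℝ) +
        ENNReal.ofReal ((D ^ 2 + 1) * (m ^ s + 1)) * A ^ (2:ℝ) ≠ ∞ :=
      ENNReal.add_ne_top.2 ⟨ENNReal.mul_ne_top ENNReal.ofReal_ne_top hBfin,
        ENNReal.mul_ne_top ENNReal.ofReal_ne_top hAfin⟩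
    have hIfin : I ≠ ∞ := ne_top_of_le_ne_top hRfin hIbound
    have heLfin : eLpNorm (fun x => f x * g x) 2 volume ≠ ∞ := by
      intro hcon
      rw [hcon, ENNReal.top_rpow_of_pos (by norm_num : (0:ℝ) < 2)] at hIe
      exact hIfin hIe.symm
    have hsm : AEStronglyMeasurable (fun x => f x * g x) (volume : Measure E3) :=
      (hfm.mul hg.continuous.measurable).aestronglyMeasurable
    refine ⟨⟨hsm, lt_top_iff_ne_top.2 heLfin⟩, ?_⟩
    -- final real inequality
    have hLHS : (eLpNorm (fun x => f x * g x) 2 volume).toReal ^ 2 = I.toReal := by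
      rw [← Real.rpow_two, ENNReal.toReal_rpow, hIe]
    have htoR : (ENNReal.ofReal ε * Bg ^ (2:ℝ) +
        ENNReal.ofReal ((D ^ 2 + 1) * (m ^ s + 1)) * A ^ (2:ℝ)).toReal =
        ε * Bg.toReal ^ 2 + (D ^ 2 + 1) * (m ^ s + 1) * A.toReal ^ 2 := by
      rw [ENNReal.toReal_add (ENNReal.mul_ne_top ENNReal.ofReal_ne_top hBfin)
        (ENNReal.mul_ne_top ENNReal.ofReal_ne_top hAfin), ENNReal.toReal_mul,
        ENNReal.toReal_mul, ENNReal.toReal_ofReal hε.le,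
        ENNReal.toReal_ofReal (by positivity), ← ENNReal.toReal_rpow, ← ENNReal.toReal_rpow,
        Real.rpow_two, Real.rpow_two]
    have hfinal : I.toReal ≤ ε * Bg.toReal ^ 2 + (D ^ 2 + 1) * (m ^ s + 1) * A.toReal ^ 2 := by
      rw [← htoR]
      exact ENNReal.toReal_mono hRfin hIbound
    rw [hLHS]
    exact hfinal
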